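/- Let X be a real Hilbert space, ξ ∈ X, W a closed subspace with orthogonal projection Π_W, and a, b ∈ ℝ^J with L := ‖ξ‖, L_W := ‖Π_W ξ‖. Suppose componentwise |a_j − b_j| ≤ δ for all j, and suppose ‖b‖₂ = L_W (i.e., b is the vector of exact reduced quadratures). If L + L_W > 0, then |‖a‖₂ − L| ≤ √J δ + ‖Π_{W⊥} ξ‖² / (L + L_W). -/

import Mathlib

theorem stmt_3 {X : Type*} [NormedAddCommGroup X] [InnerProductSpace ℝ X]
    [CompleteSpace X] (W : Submodule ℝ X) [CompleteSpace W] (ξ : X)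
    {J : ℕ} (a b : EuclideanSpace ℝ (Fin J)) (δ : ℝ) (hδ : 0 ≤ δ)
    (hab : ∀ j, |a j - b j| ≤ δ)
    (hb : ‖b‖ = ‖(Submodule.orthogonalProjectionOnto W ξ : X)‖)
    (hpos : 0 < ‖ξ‖ + ‖(Submodule.orthogonalProjectionOnto W ξ : X)‖) :
    |‖a‖ - ‖ξ‖| ≤ Real.sqrt J * δ +
      ‖(Submodule.orthogonalProjectionOnto Wᗮ ξ : X)‖ ^ 2 /
        (‖ξ‖ + ‖(Submodule.orthogonalProjectionOnto W ξ : X)‖) := by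
  set L := ‖ξ‖
  set LW := ‖(Submodule.orthogonalProjectionOnto W ξ : X)‖
  have hsq : L ^ 2 = LW ^ 2 + ‖(Submodule.orthogonalProjectionOnto Wᗮ ξ : X)‖ ^ 2 :=
    Submodule.norm_sq_eq_add_norm_sq_projection ξ W
  have hLW : LW ≤ L := by
    nlinarith [sq_nonneg ‖(Submodule.orthogonalProjectionOnto Wᗮ ξ : X)‖, norm_nonneg ξ,
      norm_nonneg ((Submodule.orthogonalProjectionOnto W ξ : X))]
  have h1 : ‖a - b‖ ≤ Real.sqrt J * δ := by
    rw [EuclideanSpace.norm_eq]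
    have : ∑ j, ‖(a - b) j‖ ^ 2 ≤ ∑ _j : Fin J, δ ^ 2 := by
      apply Finset.sum_le_sum
      intro j _
      have := hab j
      have : ‖(a - b) j‖ ≤ δ := by
        simpa [Real.norm_eq_abs] using hab j
      nlinarith [norm_nonneg ((a - b) j)]
    calc Real.sqrt (∑ j, ‖(a - b) j‖ ^ 2) ≤ Real.sqrt (J * δ ^ 2) := by
          apply Real.sqrt_le_sqrt; simpa using this
      _ = Real.sqrt J * δ := by
          rw [Real.sqrt_mul (by positivity), Real.sqrt_sq hδ]
  have h2 : |‖a‖ - ‖b‖| ≤ Real.sqrt J * δ := (abs_norm_sub_norm_le a b).trans h1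
  have h3 : |‖b‖ - L| = ‖(Submodule.orthogonalProjectionOnto Wᗮ ξ : X)‖ ^ 2 / (L + LW) := by
    rw [hb, abs_sub_comm, abs_of_nonneg (by linarith)]
    rw [eq_div_iff hpos.ne']
    nlinarith
  calc |‖a‖ - L| ≤ |‖a‖ - ‖b‖| + |‖b‖ - L| := abs_sub_le _ _ _
    _ ≤ Real.sqrt J * δ + ‖(Submodule.orthogonalProjectionOnto Wᗮ ξ : X)‖ ^ 2 / (L + LW) := by
        rw [h3] at *; linarith
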